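/- If the function g := g₁/g₂ is strictly decreasing on (0, ∞), then the function A satisfies A'(u₁) < 0 for every u₁ > 0. -/

import Mathlib

open Finset

noncomputable def U (g1 : ℝ → ℝ) (h : ℝ) : ℕ → ℝ → ℝ
  | 0, u => u
  | 1, u => u
  | 2, u => u + h ^ 2 / 2 * g1 u
  | k + 3, u => 2 * U g1 h (k + 2) u - U g1 h (k + 1) u + h ^ 2 * g1 (U g1 h (k + 2) u)

noncomputable def Afun (g1 g2 : ℝ → ℝ) (n : ℕ) (h : ℝ) (u : ℝ) : ℝ :=
  ((U g1 h n u - U g1 h (n - 1) u) / h + h / 2 * g1 (U g1 h n u)) / g2 (U g1 h n u)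

/-- Derivative of `U` with respect to the initial value. -/
noncomputable def Wd (g1 : ℝ → ℝ) (h : ℝ) : ℕ → ℝ → ℝ
  | 0, _ => 1
  | 1, _ => 1
  | 2, u => 1 + h ^ 2 / 2 * deriv g1 u
  | k + 3, u => 2 * Wd g1 h (k + 2) u - Wd g1 h (k + 1) u
      + h ^ 2 * deriv g1 (U g1 h (k + 2) u) * Wd g1 h (k + 2) u

lemma hasDerivAt_U (g1 : ℝ → ℝ) (hg : Differentiable ℝ g1) (h : ℝ) (k : ℕ) (u : ℝ) :
    HasDerivAt (U g1 h k) (Wd g1 h k u) u := by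
  induction k using Nat.strong_induction_on with
  | _ k ih =>
    match k with
    | 0 =>
      have : U g1 h 0 = fun u => u := by funext u; simp [U]
      rw [this]; simpa [Wd] using (hasDerivAt_id' u)
    | 1 =>
      have : U g1 h 1 = fun u => u := by funext u; simp [U]
      rw [this]; simpa [Wd] using (hasDerivAt_id' u)
    | 2 =>
      have : U g1 h 2 = fun u => u + h ^ 2 / 2 * g1 u := by funext u; simp [U]
      rw [this]
      have hg1 : HasDerivAt g1 (deriv g1 u) u := (hg u).hasDerivAt
      exact (hasDerivAt_id' u).add ((hg1.const_mul (h ^ 2 / 2)))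
    | (k + 3) =>
      have hU : U g1 h (k + 3) = fun u => 2 * U g1 h (k + 2) u - U g1 h (k + 1) u
          + h ^ 2 * g1 (U g1 h (k + 2) u) := by funext u; simp [U]
      rw [hU]
      have ih2 := ih (k + 2) (by omega)
      have ih1 := ih (k + 1) (by omega)
      have hg1 : HasDerivAt g1 (deriv g1 (U g1 h (k + 2) u)) (U g1 h (k + 2) u) :=
        (hg _).hasDerivAt
      have hcomp : HasDerivAt (fun u => g1 (U g1 h (k + 2) u))
          (deriv g1 (U g1 h (k + 2) u) * Wd g1 h (k + 2) u) u := hg1.comp u ih2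
      have := ((ih2.const_mul 2).sub ih1).add (hcomp.const_mul (h ^ 2))
      exact this.congr_deriv (by simp only [Wd]; ring)

set_option maxHeartbeats 1000000 in
theorem stmt10
    (g1 g2 : ℝ → ℝ)
    (hg1C : ContDiff ℝ 3 g1) (hg2C : ContDiff ℝ 3 g2)
    (hg1A : AnalyticAt ℝ g1 0) (hg2A : AnalyticAt ℝ g2 0)
    (hg10 : g1 0 = 0) (hg20 : g2 0 = 0)
    (hg1d1 : ∀ x > 0, 0 < deriv g1 x) (hg2d1 : ∀ x > 0, 0 < deriv g2 x)
    (hg1d2 : ∀ x > 0, 0 < iteratedDeriv 2 g1 x) (hg2d2 : ∀ x > 0, 0 < iteratedDeriv 2 g2 x)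
    (hg1d3 : ∀ x > 0, 0 ≤ iteratedDeriv 3 g1 x) (hg2d3 : ∀ x > 0, 0 ≤ iteratedDeriv 3 g2 x)
    (n : ℕ) (hn : 2 ≤ n) (h : ℝ) (hh : h = 1 / ((n : ℝ) - 1))
    (hdec : StrictAntiOn (fun x => g1 x / g2 x) (Set.Ioi 0)) :
    ∀ u1 > (0 : ℝ), deriv (Afun g1 g2 n h) u1 < 0 := by
  intro u1 hu1
  -- h > 0
  have hn2 : (2 : ℝ) ≤ (n : ℝ) := by exact_mod_cast hn
  have hhpos : 0 < h := by rw [hh]; exact div_pos one_pos (by linarith)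
  -- differentiability
  have hg1diff : Differentiable ℝ g1 := hg1C.differentiable (by norm_num)
  have hg2diff : Differentiable ℝ g2 := hg2C.differentiable (by norm_num)
  have hd1C : ContDiff ℝ 2 (deriv g1) :=
    ((contDiff_succ_iff_deriv (n := 2)).mp (by exact_mod_cast hg1C)).2.2
  -- positivity of g1, g2 on (0,∞)
  have hg1mono : StrictMonoOn g1 (Set.Ici 0) :=
    strictMonoOn_of_deriv_pos (convex_Ici 0) hg1diff.continuous.continuousOn
      (fun x hx => hg1d1 x (by rwa [interior_Ici] at hx))
  have hg2mono : StrictMonoOn g2 (Set.Ici 0) :=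
    strictMonoOn_of_deriv_pos (convex_Ici 0) hg2diff.continuous.continuousOn
      (fun x hx => hg2d1 x (by rwa [interior_Ici] at hx))
  have hg1pos : ∀ x, 0 < x → 0 < g1 x := fun x hx => by
    have := hg1mono (Set.self_mem_Ici) (le_of_lt hx) hx
    rwa [hg10] at this
  have hg2pos : ∀ x, 0 < x → 0 < g2 x := fun x hx => by
    have := hg2mono (Set.self_mem_Ici) (le_of_lt hx) hx
    rwa [hg20] at this
  -- deriv g1 strictly increasing on [0, ∞)
  have hiter2 : iteratedDeriv 2 g1 = deriv (deriv g1) := by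
    rw [show (2 : ℕ) = 1 + 1 from rfl, iteratedDeriv_succ, iteratedDeriv_one]
  have hg1'mono : StrictMonoOn (deriv g1) (Set.Ici 0) :=
    strictMonoOn_of_deriv_pos (convex_Ici 0) hd1C.continuous.continuousOn
      (fun x hx => by
        rw [interior_Ici] at hx
        have := hg1d2 x hx
        rwa [hiter2] at this)
  -- convexity inequality
  have hconv : ∀ x y : ℝ, 0 < x → x < y → g1 y ≤ g1 x + deriv g1 y * (y - x) := by
    intro x y hx hxy
    obtain ⟨c, hc, hceq⟩ := exists_deriv_eq_slope g1 hxy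
      hg1diff.continuous.continuousOn (fun z _ => (hg1diff z).differentiableWithinAt)
    have hcy : deriv g1 c ≤ deriv g1 y :=
      le_of_lt (hg1'mono (Set.mem_Ici.mpr (le_of_lt (lt_trans hx hc.1)))
        (Set.mem_Ici.mpr (le_of_lt (lt_trans hx hxy))) hc.2)
    have hyx : (0:ℝ) < y - x := by linarith
    have : g1 y - g1 x = deriv g1 c * (y - x) := by
      field_simp at hceq
      linarith [hceq]
    nlinarith
  -- abbreviations
  set Uk : ℕ → ℝ := fun k => U g1 h k u1 with hUk
  set Wk : ℕ → ℝ := fun k => Wd g1 h k u1 with hWk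
  set d : ℕ → ℝ := fun k => Uk (k + 1) - Uk k with hd
  set e : ℕ → ℝ := fun k => Wk (k + 1) - Wk k with he
  -- recurrences
  have hUrec : ∀ k, Uk (k + 3) = 2 * Uk (k + 2) - Uk (k + 1) + h ^ 2 * g1 (Uk (k + 2)) := by
    intro k; simp [hUk, U]
  have hWrec : ∀ k, Wk (k + 3) = 2 * Wk (k + 2) - Wk (k + 1)
      + h ^ 2 * deriv g1 (Uk (k + 2)) * Wk (k + 2) := by
    intro k; simp [hUk, hWk, Wd]
  have hU1 : Uk 1 = u1 := by simp [hUk, U]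
  have hU2 : Uk 2 = u1 + h ^ 2 / 2 * g1 u1 := by simp [hUk, U]
  have hW1 : Wk 1 = 1 := by simp [hWk, Wd]
  have hW2 : Wk 2 = 1 + h ^ 2 / 2 * deriv g1 u1 := by simp [hWk, Wd]
  have hdrec : ∀ k, d (k + 2) = d (k + 1) + h ^ 2 * g1 (Uk (k + 2)) := by
    intro k; simp only [hd]; rw [hUrec]; ring
  have herec : ∀ k, e (k + 2) = e (k + 1) + h ^ 2 * deriv g1 (Uk (k + 2)) * Wk (k + 2) := by
    intro k; simp only [he]; rw [hWrec]; ring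
  -- (A) positivity of d and lower bound on Uk
  have hA : ∀ k, u1 ≤ Uk (k + 1) ∧ 0 < d (k + 1) := by
    intro k
    induction k with
    | zero =>
      constructor
      · rw [hU1]
      · have : d 1 = h ^ 2 / 2 * g1 u1 := by simp only [hd]; rw [hU2, hU1]; ring
        rw [this]; have := hg1pos u1 hu1; positivity
    | succ k ih =>
      have hUk2 : u1 ≤ Uk (k + 2) := by
        have : Uk (k + 2) = Uk (k + 1) + d (k + 1) := by simp only [hd]; ring
        rw [this]; linarith [ih.1, ih.2]
      refine ⟨hUk2, ?_⟩
      rw [hdrec]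
      have hpos : 0 < g1 (Uk (k + 2)) := hg1pos _ (lt_of_lt_of_le hu1 hUk2)
      nlinarith [ih.2, sq_nonneg h]
  -- (B) positivity of Wk and e
  have hB : ∀ k, 0 < Wk (k + 1) ∧ 0 < e (k + 1) := by
    intro k
    induction k with
    | zero =>
      constructor
      · rw [hW1]; norm_num
      · have : e 1 = h ^ 2 / 2 * deriv g1 u1 := by simp only [he]; rw [hW2, hW1]; ring
        rw [this]; have := hg1d1 u1 hu1; positivity
    | succ k ih =>
      have hWk2 : 0 < Wk (k + 2) := by
        have : Wk (k + 2) = Wk (k + 1) + e (k + 1) := by simp only [he]; ring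
        rw [this]; linarith [ih.1, ih.2]
      refine ⟨hWk2, ?_⟩
      rw [herec]
      have hUpos : 0 < Uk (k + 2) := lt_of_lt_of_le hu1 (hA (k + 1)).1
      have hder : 0 < deriv g1 (Uk (k + 2)) := hg1d1 _ hUpos
      nlinarith [ih.2, mul_pos (mul_pos (pow_pos hhpos 2) hder) hWk2]
  -- (C) main induction
  set Z : ℕ → ℝ := fun k =>
    e k * g1 (Uk (k + 1)) - d k * deriv g1 (Uk (k + 1)) * Wk (k + 1) with hZ
  have hC : ∀ k, Z (k + 1) < 0 := by
    intro k
    induction k with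
    | zero =>
      have hd1 : d 1 = h ^ 2 / 2 * g1 u1 := by simp only [hd]; rw [hU2, hU1]; ring
      have he1 : e 1 = h ^ 2 / 2 * deriv g1 u1 := by simp only [he]; rw [hW2, hW1]; ring
      have hU2lt : u1 < Uk 2 := by
        rw [hU2]
        have := mul_pos (div_pos (pow_pos hhpos 2) two_pos) (hg1pos u1 hu1)
        linarith
      have hcv := hconv u1 (Uk 2) hu1 hU2lt
      have hmono := hg1'mono (Set.mem_Ici.mpr (le_of_lt hu1))
        (Set.mem_Ici.mpr (le_of_lt (lt_trans hu1 hU2lt))) hU2lt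
      have hg1u : 0 < g1 u1 := hg1pos u1 hu1
      have hg1'u : 0 < deriv g1 u1 := hg1d1 u1 hu1
      have hU2u : Uk 2 - u1 = h ^ 2 / 2 * g1 u1 := by rw [hU2]; ring
      have hZ0 : Z 1 = e 1 * g1 (Uk 2) - d 1 * deriv g1 (Uk 2) * Wk 2 := rfl
      show Z 1 < 0
      rw [hZ0, hd1, he1, hW2]
      rw [hU2u] at hcv
      have hg1'U2 : 0 < deriv g1 (Uk 2) := hg1d1 _ (lt_trans hu1 hU2lt)
      have hc1 : 0 < h ^ 2 / 2 * deriv g1 u1 := by positivity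
      have hc2 : 0 < h ^ 2 / 2 * g1 u1 := by positivity
      nlinarith [mul_le_mul_of_nonneg_left hcv (le_of_lt hc1),
        mul_lt_mul_of_pos_left hmono hc2]
    | succ k ih =>
      -- notation
      have hUmem1 : u1 ≤ Uk (k + 2) := (hA (k + 1)).1
      have hUmem2 : u1 ≤ Uk (k + 3) := (hA (k + 2)).1
      have hd2pos : 0 < d (k + 2) := (hA (k + 1)).2
      have hW2pos : 0 < Wk (k + 2) := (hB (k + 1)).1
      have he2pos : 0 < e (k + 2) := (hB (k + 1)).2
      have hUlt : Uk (k + 2) < Uk (k + 3) := by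
        have : Uk (k + 3) = Uk (k + 2) + d (k + 2) := by simp only [hd]; ring
        rw [this]; linarith
      have hU2pos : 0 < Uk (k + 2) := lt_of_lt_of_le hu1 hUmem1
      -- convexity: g1 (Uk (k+3)) ≤ g1 (Uk (k+2)) + deriv g1 (Uk (k+3)) * d (k+2)
      have hcv : g1 (Uk (k + 3)) ≤ g1 (Uk (k + 2)) + deriv g1 (Uk (k + 3)) * d (k + 2) := by
        have := hconv (Uk (k + 2)) (Uk (k + 3)) hU2pos hUlt
        have hdd : Uk (k + 3) - Uk (k + 2) = d (k + 2) := by simp only [hd]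
        rwa [hdd] at this
      have hmono : deriv g1 (Uk (k + 2)) < deriv g1 (Uk (k + 3)) :=
        hg1'mono (Set.mem_Ici.mpr (le_trans (le_of_lt hu1) hUmem1))
          (Set.mem_Ici.mpr (le_trans (le_of_lt hu1) hUmem2)) hUlt
      -- key step
      have hW3 : Wk (k + 3) = Wk (k + 2) + e (k + 2) := by simp only [he]; ring
      have hZ1 : Z (k + 1) = e (k + 1) * g1 (Uk (k + 2))
          - d (k + 1) * deriv g1 (Uk (k + 2)) * Wk (k + 2) := rfl
      have hZ2 : Z (k + 2) = e (k + 2) * g1 (Uk (k + 3))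
          - d (k + 2) * deriv g1 (Uk (k + 3)) * Wk (k + 3) := rfl
      have step1 : Z (k + 2) ≤ e (k + 2) * g1 (Uk (k + 2))
          - deriv g1 (Uk (k + 3)) * d (k + 2) * Wk (k + 2) := by
        rw [hZ2, hW3]
        nlinarith [mul_le_mul_of_nonneg_left hcv (le_of_lt he2pos)]
      have step2 : e (k + 2) * g1 (Uk (k + 2))
          - deriv g1 (Uk (k + 3)) * d (k + 2) * Wk (k + 2)
          = Z (k + 1) + Wk (k + 2) * d (k + 2)
            * (deriv g1 (Uk (k + 2)) - deriv g1 (Uk (k + 3))) := by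
        rw [hZ1, hdrec, herec]
        ring
      have hneg : Wk (k + 2) * d (k + 2)
          * (deriv g1 (Uk (k + 2)) - deriv g1 (Uk (k + 3))) < 0 :=
        mul_neg_of_pos_of_neg (mul_pos hW2pos hd2pos) (by linarith)
      show Z (k + 2) < 0
      calc Z (k + 2) ≤ _ := step1
        _ = _ := step2
        _ < 0 := by linarith
  -- write n = m + 2
  obtain ⟨m, rfl⟩ : ∃ m, n = m + 2 := ⟨n - 2, by omega⟩
  -- raw abbreviations
  have hUnpos : 0 < U g1 h (m + 2) u1 := by
    have := lt_of_lt_of_le hu1 (hA (m + 1)).1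
    simpa [hUk] using this
  have hWnpos : 0 < Wd g1 h (m + 2) u1 := by
    have := (hB (m + 1)).1
    simpa [hWk] using this
  have hG1 : 0 < g1 (U g1 h (m + 2) u1) := hg1pos _ hUnpos
  have hG2 : 0 < g2 (U g1 h (m + 2) u1) := hg2pos _ hUnpos
  have hG2' : 0 < deriv g2 (U g1 h (m + 2) u1) := hg2d1 _ hUnpos
  have hG1' : 0 < deriv g1 (U g1 h (m + 2) u1) := hg1d1 _ hUnpos
  have hdm : 0 < U g1 h (m + 2) u1 - U g1 h (m + 1) u1 := by
    have := (hA m).2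
    simpa [hd, hUk] using this
  -- consequence of hdec : deriv g1 * g2 ≤ g1 * deriv g2 at Un
  have hkey : deriv g1 (U g1 h (m + 2) u1) * g2 (U g1 h (m + 2) u1)
      ≤ g1 (U g1 h (m + 2) u1) * deriv g2 (U g1 h (m + 2) u1) := by
    set x0 : ℝ := U g1 h (m + 2) u1 with hx0
    have hφderiv : deriv (fun x => g1 x / g2 x) x0
        = (deriv g1 x0 * g2 x0 - g1 x0 * deriv g2 x0) / (g2 x0) ^ 2 :=
      deriv_div (hg1diff.differentiableAt) (hg2diff.differentiableAt) (ne_of_gt hG2)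
    have hφle : deriv (fun x => g1 x / g2 x) x0 ≤ 0 := by
      by_contra hpos
      push_neg at hpos
      have hφdiff : DifferentiableAt ℝ (fun x => g1 x / g2 x) x0 :=
        (hg1diff.differentiableAt).div (hg2diff.differentiableAt) (ne_of_gt hG2)
      have hDA : HasDerivAt (fun x => g1 x / g2 x) (deriv (fun x => g1 x / g2 x) x0) x0 :=
        hφdiff.hasDerivAt
      rw [hasDerivAt_iff_tendsto_slope] at hDA
      have h2 : Filter.Tendsto (slope (fun x => g1 x / g2 x) x0)
          (nhdsWithin x0 (Set.Ioi x0)) (nhds (deriv (fun x => g1 x / g2 x) x0)) :=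
        hDA.mono_left (nhdsWithin_mono x0 (fun y hy => ne_of_gt hy))
      have h3 : ∀ᶠ y in nhdsWithin x0 (Set.Ioi x0),
          0 < slope (fun x => g1 x / g2 x) x0 y :=
        h2.eventually (eventually_gt_nhds hpos)
      obtain ⟨y, hy1, hy2⟩ := (h3.and self_mem_nhdsWithin).exists
      have hyU : x0 < y := hy2
      rw [slope_def_field] at hy1
      have hlt : g1 x0 / g2 x0 < g1 y / g2 y := by
        have hyx : 0 < y - x0 := by linarith
        rcases div_pos_iff.mp hy1 with ⟨ha, _⟩ | ⟨_, hb⟩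
        · linarith
        · linarith
      have := hdec (Set.mem_Ioi.mpr hUnpos) (Set.mem_Ioi.mpr (lt_trans hUnpos hyU)) hyU
      simp only at this
      linarith
    rw [hφderiv] at hφle
    have hD : (0 : ℝ) < (g2 x0) ^ 2 := by positivity
    rcases div_nonpos_iff.mp hφle with ⟨_, h2⟩ | ⟨h1, _⟩
    · linarith
    · linarith
  -- the main inequality  Z (m+1) < 0  in raw form
  have hZm : (Wd g1 h (m + 2) u1 - Wd g1 h (m + 1) u1) * g1 (U g1 h (m + 2) u1)
      - (U g1 h (m + 2) u1 - U g1 h (m + 1) u1) * deriv g1 (U g1 h (m + 2) u1)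
        * Wd g1 h (m + 2) u1 < 0 := by
    have := hC m
    simpa [hZ, hd, he, hUk, hWk] using this
  -- derivative of Afun
  have hUder2 : HasDerivAt (U g1 h (m + 2)) (Wd g1 h (m + 2) u1) u1 :=
    hasDerivAt_U g1 hg1diff h (m + 2) u1
  have hUder1 : HasDerivAt (U g1 h (m + 1)) (Wd g1 h (m + 1) u1) u1 :=
    hasDerivAt_U g1 hg1diff h (m + 1) u1
  have hg1c : HasDerivAt (fun u => g1 (U g1 h (m + 2) u))
      (deriv g1 (U g1 h (m + 2) u1) * Wd g1 h (m + 2) u1) u1 :=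
    ((hg1diff _).hasDerivAt).comp u1 hUder2
  have hg2c : HasDerivAt (fun u => g2 (U g1 h (m + 2) u))
      (deriv g2 (U g1 h (m + 2) u1) * Wd g1 h (m + 2) u1) u1 :=
    ((hg2diff _).hasDerivAt).comp u1 hUder2
  have hNum : HasDerivAt
      (fun u => (U g1 h (m + 2) u - U g1 h (m + 1) u) / h + h / 2 * g1 (U g1 h (m + 2) u))
      ((Wd g1 h (m + 2) u1 - Wd g1 h (m + 1) u1) / h
        + h / 2 * (deriv g1 (U g1 h (m + 2) u1) * Wd g1 h (m + 2) u1)) u1 :=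
    ((hUder2.sub hUder1).div_const h).add (hg1c.const_mul (h / 2))
  have hAfun : Afun g1 g2 (m + 2) h = fun u =>
      ((U g1 h (m + 2) u - U g1 h (m + 1) u) / h + h / 2 * g1 (U g1 h (m + 2) u))
        / g2 (U g1 h (m + 2) u) := by
    funext u
    simp [Afun]
  have hDD := hNum.fun_div hg2c (ne_of_gt hG2)
  rw [hAfun, hDD.deriv]
  -- final inequality
  set A1 : ℝ := U g1 h (m + 2) u1
  set A0 : ℝ := U g1 h (m + 1) u1
  set B1 : ℝ := Wd g1 h (m + 2) u1
  set B0 : ℝ := Wd g1 h (m + 1) u1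
  set P : ℝ := (B1 - B0) / h + h / 2 * (deriv g1 A1 * B1) with hP
  set V : ℝ := (A1 - A0) / h + h / 2 * g1 A1 with hV
  have hVpos : 0 < V := by
    rw [hV]
    have h1 : 0 < (A1 - A0) / h := div_pos hdm hhpos
    nlinarith
  have hPG : P * g1 A1 - V * (deriv g1 A1 * B1)
      = ((B1 - B0) * g1 A1 - (A1 - A0) * deriv g1 A1 * B1) / h := by
    rw [hP, hV]; field_simp; ring
  have hPGlt : P * g1 A1 - V * (deriv g1 A1 * B1) < 0 := by
    rw [hPG]
    exact div_neg_of_neg_of_pos hZm hhpos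
  have hid : (P * g2 A1 - V * (deriv g2 A1 * B1)) * g1 A1
      = g2 A1 * (P * g1 A1 - V * (deriv g1 A1 * B1))
        + (V * B1) * (deriv g1 A1 * g2 A1 - g1 A1 * deriv g2 A1) := by ring
  have hNG1 : (P * g2 A1 - V * (deriv g2 A1 * B1)) * g1 A1 < 0 := by
    rw [hid]
    have h1 : g2 A1 * (P * g1 A1 - V * (deriv g1 A1 * B1)) < 0 :=
      mul_neg_of_pos_of_neg hG2 hPGlt
    have h2 : (V * B1) * (deriv g1 A1 * g2 A1 - g1 A1 * deriv g2 A1) ≤ 0 :=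
      mul_nonpos_of_nonneg_of_nonpos (le_of_lt (mul_pos hVpos hWnpos)) (by linarith)
    linarith
  have hNlt : P * g2 A1 - V * (deriv g2 A1 * B1) < 0 := by
    by_contra hcon
    push_neg at hcon
    nlinarith [mul_nonneg hcon (le_of_lt hG1)]
  exact div_neg_of_neg_of_pos hNlt (pow_pos hG2 2)
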